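/- In a strong locally out-transitive oriented graph D, if H is an inclusion-wise maximal hub, then no vertex outside H is mixed for H; that is, there is no vertex z ∉ H together with h, h' ∈ H such that both hz and zh' are arcs of D. -/

import Mathlib

/-- `A` is the arc relation of an oriented graph: no loops and no digons. -/
def IsOriented {V : Type*} (A : V → V → Prop) : Prop :=
  Irreflexive A ∧ ∀ x y, A x y → ¬ A y x

/-- `D` is strong: a directed path between each ordered pair of vertices. -/
def IsStrong {V : Type*} (A : V → V → Prop) : Prop :=
  ∀ x y : V, Relation.ReflTransGen A x y

/-- The set `S` induces a strong subdigraph (all paths staying inside `S`). -/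
def StrongOn {V : Type*} (A : V → V → Prop) (S : Set V) : Prop :=
  ∀ x ∈ S, ∀ y ∈ S, Relation.ReflTransGen (fun a b => a ∈ S ∧ b ∈ S ∧ A a b) x y

/-- The set `S` induces a tournament. -/
def TournamentOn {V : Type*} (A : V → V → Prop) (S : Set V) : Prop :=
  ∀ x ∈ S, ∀ y ∈ S, x ≠ y → A x y ∨ A y x

/-- The set `S` induces an acyclic digraph. -/
def AcyclicOn {V : Type*} (A : V → V → Prop) (S : Set V) : Prop :=
  ∀ x : V, ¬ Relation.TransGen (fun a b => a ∈ S ∧ b ∈ S ∧ A a b) x x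

/-- The set `S` induces a semicomplete digraph. -/
def SemicompleteOn {V : Type*} (A : V → V → Prop) (S : Set V) : Prop :=
  ∀ x ∈ S, ∀ y ∈ S, x ≠ y → A x y ∨ A y x

/-- `z` lies strictly inside the cyclic interval `]x,y[` for the cyclic order `σ`. -/
def CycBtw {V : Type*} [Fintype V] (σ : V ≃ Fin (Fintype.card V)) (x z y : V) : Prop :=
  0 < (σ z - σ x).val ∧ (σ z - σ x).val < (σ y - σ x).val

/-- In-round: a cyclic order such that for every arc `xy` and `z ∈ ]x,y[`, `zy` is an arc. -/
def InRound {V : Type*} [Fintype V] (A : V → V → Prop) : Prop :=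
  ∃ σ : V ≃ Fin (Fintype.card V), ∀ x y z : V, A x y → CycBtw σ x z y → A z y

/-- Out-round: a cyclic order such that for every arc `xy` and `z ∈ ]x,y[`, `xz` is an arc. -/
def OutRound {V : Type*} [Fintype V] (A : V → V → Prop) : Prop :=
  ∃ σ : V ≃ Fin (Fintype.card V), ∀ x y z : V, A x y → CycBtw σ x z y → A x z

/-- Every out-neighbourhood induces a transitive tournament. -/
def LocallyOutTransitive {V : Type*} (A : V → V → Prop) : Prop :=
  ∀ x : V, TournamentOn A {y | A x y} ∧ AcyclicOn A {y | A x y}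

/-- A hub: a nonempty set inducing a strong subdigraph, all of whose vertices are
in-neighbours of some vertex outside of it. -/
def Hub {V : Type*} (A : V → V → Prop) (H : Set V) : Prop :=
  H.Nonempty ∧ StrongOn A H ∧ ∃ x ∉ H, ∀ h ∈ H, A h x

/-- Locally semicomplete digraph: no loops, and every out- and in-neighbourhood
induces a semicomplete digraph (digons are allowed). -/
def LocallySemicomplete {V : Type*} (A : V → V → Prop) : Prop :=
  Irreflexive A ∧ (∀ x : V, SemicompleteOn A {y | A x y}) ∧
    ∀ x : V, SemicompleteOn A {y | A y x}

/-- The underlying undirected graph is connected. -/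
def ConnectedDigraph {V : Type*} (A : V → V → Prop) : Prop :=
  ∀ x y : V, Relation.ReflTransGen (fun a b => A a b ∨ A b a) x y

/-- A weak hub: a nonempty set inducing a strong subdigraph that is strictly
in-dominated or strictly out-dominated by some vertex outside of it. -/
def WeakHub {V : Type*} (A : V → V → Prop) (X : Set V) : Prop :=
  X.Nonempty ∧ StrongOn A X ∧
    ∃ x ∉ X, (∀ u ∈ X, A u x ∧ ¬ A x u) ∨ ∀ u ∈ X, A x u ∧ ¬ A u x

/-- A set `X` is mixed if some outside vertex has both an out-neighbour and an
in-neighbour in `X`. -/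
def MixedSet {V : Type*} (A : V → V → Prop) (X : Set V) : Prop :=
  ∃ x ∉ X, (∃ u ∈ X, A x u) ∧ ∃ v ∈ X, A v x

/-- `X` is an inclusion-wise maximal weak hub. -/
def MaxWeakHub {V : Type*} (A : V → V → Prop) (X : Set V) : Prop :=
  WeakHub A X ∧ ∀ Y : Set V, WeakHub A Y → X ⊆ Y → Y = X

lemma exists_boundary {V : Type*} {R : V → V → Prop} {P : V → Prop} {u v : V}
    (h : Relation.ReflTransGen R u v) (hu : P u) (hv : ¬ P v) :
    ∃ a b, R a b ∧ P a ∧ ¬ P b := by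
  induction h with
  | refl => exact absurd hu hv
  | @tail b c hab hbc ih =>
    by_cases hb : P b
    · exact ⟨_, _, hbc, hb, hv⟩
    · exact ih hb

theorem stmt4 {V : Type*} [Fintype V] (A : V → V → Prop)
    (hor : IsOriented A) (hstrong : IsStrong A) (hloc : LocallyOutTransitive A)
    (H : Set V) (hhub : Hub A H)
    (hmax : ∀ H' : Set V, Hub A H' → H ⊆ H' → H' = H) :
    ¬ ∃ z ∉ H, ∃ h ∈ H, ∃ h' ∈ H, A h z ∧ A z h' := by
  rintro ⟨z, hzH, h, hhH, h', hh'H, hhz, hzh'⟩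
  obtain ⟨hirr, hnodigon⟩ := hor
  obtain ⟨hne, hstrongH, x, hxH, hdom⟩ := hhub
  have hnh'z : ¬ A h' z := hnodigon z h' hzh'
  obtain ⟨w, k, ⟨hwH, hkH, hwk⟩, hwz, hnkz⟩ :=
    exists_boundary (P := fun u => A u z) (hstrongH h hhH h' hh'H) hhz hnh'z
  have hzk : A z k := by
    rcases (hloc w).1 z hwz k hwk (fun e => hzH (e ▸ hkH)) with h1 | h2
    · exact h1
    · exact absurd h2 hnkz
  have hwx : A w x := hdom w hwH
  have hkx : A k x := hdom k hkH
  have hznex : z ≠ x := fun e => hnodigon k x hkx (e ▸ hzk)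
  rcases (hloc w).1 z hwz x hwx hznex with hzx | hxz
  · -- z → x : H ∪ {z} is a bigger hub, contradiction with maximality
    have hub' : Hub A (insert z H) := by
      refine ⟨⟨z, Set.mem_insert z H⟩, ?_, x, ?_, ?_⟩
      · intro a ha b hb
        have lift : ∀ c ∈ H, ∀ d ∈ H,
            Relation.ReflTransGen
              (fun p q => p ∈ insert z H ∧ q ∈ insert z H ∧ A p q) c d := by
          intro c hc d hd
          exact Relation.ReflTransGen.mono (r := fun a b => a ∈ H ∧ b ∈ H ∧ A a b)
            (p := fun p q => p ∈ insert z H ∧ q ∈ insert z H ∧ A p q)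
            (fun p q ⟨hp, hq, hpq⟩ => ⟨Set.mem_insert_of_mem _ hp,
              Set.mem_insert_of_mem _ hq, hpq⟩) _ _ (hstrongH c hc d hd)
        rcases ha with rfl | ha
        · rcases hb with rfl | hb
          · exact Relation.ReflTransGen.refl
          · exact Relation.ReflTransGen.head
              ⟨Set.mem_insert _ H, Set.mem_insert_of_mem _ hh'H, hzh'⟩
              (lift h' hh'H b hb)
        · rcases hb with rfl | hb
          · exact Relation.ReflTransGen.tail (lift a ha w hwH)
              ⟨Set.mem_insert_of_mem _ hwH, Set.mem_insert _ H, hwz⟩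
          · exact lift a ha b hb
      · intro hx
        rcases hx with rfl | hx
        · exact hznex rfl
        · exact hxH hx
      · intro u hu
        rcases hu with rfl | hu
        · exact hzx
        · exact hdom u hu
    have := hmax (insert z H) hub' (Set.subset_insert z H)
    exact hzH (this ▸ Set.mem_insert z H)
  · -- x → z : cycle z → k → x → z inside w⁺, contradicting acyclicity
    exact (hloc w).2 z
      (Relation.TransGen.head ⟨hwz, hwk, hzk⟩
        (Relation.TransGen.head ⟨hwk, hwx, hkx⟩
          (Relation.TransGen.single ⟨hwx, hwz, hxz⟩)))
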